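/- Every stably free module over a commutative locally stable ring is free. -/

import Mathlib

/-- A commutative ring has stable range 1. -/
def HasStableRange1 (R : Type*) [CommRing R] : Prop :=
  ∀ a b : R, Ideal.span {a} ⊔ Ideal.span {b} = ⊤ → ∃ y : R, IsUnit (a + b * y)

/-- An element `a` is stable if `R/aR` has stable range 1. -/
def IsStableElem {R : Type*} [CommRing R] (a : R) : Prop :=
  HasStableRange1 (R ⧸ Ideal.span {a})

/-- A commutative ring is locally stable. -/
def LocallyStable (R : Type*) [CommRing R] : Prop :=
  ∀ a b : R, Ideal.span {a} ⊔ Ideal.span {b} = ⊤ →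
    ∃ y : R, HasStableRange1 (R ⧸ Ideal.span {a + b * y})

/-- A clean ring: every element is the sum of an idempotent and a unit. -/
def IsCleanRing (R : Type*) [CommRing R] : Prop :=
  ∀ a : R, ∃ e u : R, IsIdempotentElem e ∧ IsUnit u ∧ a = e + u

/-- A ring has neat range 1. -/
def NeatRange1 (R : Type*) [CommRing R] : Prop :=
  ∀ a b : R, Ideal.span {a} ⊔ Ideal.span {b} = ⊤ →
    ∃ y : R, IsCleanRing (R ⧸ Ideal.span {a + b * y})

/-- A ring has almost stable range 1: every proper homomorphic image has stable range 1. -/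
def AlmostStableRange1 (R : Type*) [CommRing R] : Prop :=
  ∀ I : Ideal R, I ≠ ⊥ → HasStableRange1 (R ⧸ I)

/-- An elementary divisor ring: every rectangular matrix admits diagonal reduction. -/
def ElementaryDivisorRing (R : Type*) [CommRing R] : Prop :=
  ∀ (m n : ℕ) (A : Matrix (Fin m) (Fin n) R),
    ∃ (P : Matrix (Fin m) (Fin m) R) (Q : Matrix (Fin n) (Fin n) R),
      IsUnit P ∧ IsUnit Q ∧
      (∀ (i : Fin m) (j : Fin n), (i : ℕ) ≠ (j : ℕ) → (P * A * Q) i j = 0) ∧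
      (∀ (i i' : Fin m) (j j' : Fin n), (i : ℕ) = (j : ℕ) → (i' : ℕ) = (j' : ℕ) →
        (i' : ℕ) = (i : ℕ) + 1 → (P * A * Q) i j ∣ (P * A * Q) i' j')

/-- A ring is strongly completable. -/
def StronglyCompletable (R : Type*) [CommRing R] : Prop :=
  ∀ (n : ℕ) (hn : 0 < n) (a : Fin n → R) (d : R),
    (⨆ i, Ideal.span {a i}) = Ideal.span {d} →
    ∃ A : Matrix (Fin n) (Fin n) R, (∀ j, A ⟨0, hn⟩ j = a j) ∧ A.det = d

section Gadgets
variable {R : Type*} [CommRing R]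

/-- Add to coordinate `i0` the linear combination `∑ c j * v j` (with `c i0 = 0`). -/
def addRowL {N : ℕ} (i0 : Fin N) (c : Fin N → R) : (Fin N → R) →ₗ[R] (Fin N → R) where
  toFun v := fun i => if i = i0 then v i + ∑ j, c j * v j else v i
  map_add' v w := by
    funext i
    by_cases hi : i = i0 <;>
      simp [hi, mul_add, Finset.sum_add_distrib] <;> ring
  map_smul' r v := by
    funext i
    by_cases hi : i = i0 <;>
      simp [hi, Finset.mul_sum, mul_left_comm, mul_add]

lemma addRowL_apply {N : ℕ} (i0 : Fin N) (c v : Fin N → R) (i : Fin N) :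
    addRowL i0 c v i = if i = i0 then v i + ∑ j, c j * v j else v i := rfl

lemma addRowL_cancel {N : ℕ} (i0 : Fin N) (c c' : Fin N → R) (hc : c i0 = 0)
    (hcc : c' = -c) (v : Fin N → R) : addRowL i0 c' (addRowL i0 c v) = v := by
  funext i
  by_cases hi : i = i0
  · subst hi
    subst hcc
    have hsum : ∀ j : Fin N, (-c) j * (addRowL i c v j) = -(c j * v j) := by
      intro j
      by_cases hj : j = i
      · subst hj; simp [hc]
      · simp [addRowL_apply, hj]
    rw [addRowL_apply, if_pos rfl, Finset.sum_congr rfl (fun j _ => hsum j),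
      addRowL_apply, if_pos rfl]
    rw [Finset.sum_neg_distrib]
    ring
  · simp [addRowL_apply, hi]

def addRow {N : ℕ} (i0 : Fin N) (c : Fin N → R) (hc : c i0 = 0) :
    (Fin N → R) ≃ₗ[R] (Fin N → R) :=
  LinearEquiv.ofLinear (addRowL i0 c) (addRowL i0 (-c))
    (LinearMap.ext fun v => by
      simpa using addRowL_cancel i0 (-c) c (by simp [hc]) (by simp) v)
    (LinearMap.ext fun v => by
      simpa using addRowL_cancel i0 c (-c) hc rfl v)

lemma addRow_apply {N : ℕ} (i0 : Fin N) (c : Fin N → R) (hc : c i0 = 0) (v : Fin N → R)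
    (i : Fin N) : addRow i0 c hc v i = if i = i0 then v i + ∑ j, c j * v j else v i := rfl

end Gadgets

section Gadgets2
variable {R : Type*} [CommRing R]

/-- Shear: add `v i0 • w` to `v`, where `w i0 = 0`. -/
def shearL {N : ℕ} (i0 : Fin N) (w : Fin N → R) : (Fin N → R) →ₗ[R] (Fin N → R) where
  toFun v := v + v i0 • w
  map_add' v v' := by
    simp only [Pi.add_apply, add_smul]
    abel
  map_smul' r v := by
    simp only [Pi.smul_apply, smul_eq_mul, RingHom.id_apply, smul_add, mul_smul]

def shear {N : ℕ} (i0 : Fin N) (w : Fin N → R) (hw : w i0 = 0) :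
    (Fin N → R) ≃ₗ[R] (Fin N → R) := by
  have key : ∀ w' w'' : Fin N → R, w' i0 = 0 → w'' = -w' →
      ∀ v, shearL i0 w'' (shearL i0 w' v) = v := by
    intro w' w'' hw' hww v
    subst hww
    have h1 : (shearL i0 w' v) i0 = v i0 := by simp [shearL, hw']
    show shearL i0 w' v + (shearL i0 w' v) i0 • (-w') = v
    rw [h1]
    show (v + v i0 • w') + v i0 • (-w') = v
    simp [smul_neg]
  refine LinearEquiv.ofLinear (shearL i0 w) (shearL i0 (-w)) ?_ ?_
  · exact LinearMap.ext fun v => key (-w) w (by simp [hw]) (by simp) v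
  · exact LinearMap.ext fun v => key w (-w) hw rfl v

lemma shear_apply {N : ℕ} (i0 : Fin N) (w : Fin N → R) (hw : w i0 = 0) (v : Fin N → R) :
    shear i0 w hw v = v + v i0 • w := rfl

/-- Acting on the first two coordinates by an SL₂ matrix `[[p,q],[r,s]]`. -/
def twoL {N : ℕ} (p q r s : R) : (Fin (N + 2) → R) →ₗ[R] (Fin (N + 2) → R) where
  toFun v := fun i => if i = 0 then p * v 0 + q * v 1 else if i = 1 then r * v 0 + s * v 1 else v i
  map_add' v v' := by
    funext i
    by_cases h0 : i = 0
    · simp [h0]; ring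
    · by_cases h1 : i = 1 <;> simp [h0, h1] <;> ring
  map_smul' t v := by
    funext i
    by_cases h0 : i = 0
    · simp [h0]; ring
    · by_cases h1 : i = 1 <;> simp [h0, h1] <;> ring

lemma twoL_apply {N : ℕ} (p q r s : R) (v : Fin (N + 2) → R) (i : Fin (N + 2)) :
    twoL p q r s v i =
      if i = 0 then p * v 0 + q * v 1 else if i = 1 then r * v 0 + s * v 1 else v i := rfl

def twoE {N : ℕ} (p q r s : R) (hdet : p * s - q * r = 1) :
    (Fin (N + 2) → R) ≃ₗ[R] (Fin (N + 2) → R) := by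
  have h10 : (1 : Fin (N + 2)) ≠ 0 := by simp [Fin.ext_iff]
  have h01 : (0 : Fin (N + 2)) ≠ 1 := by simp [Fin.ext_iff]
  refine LinearEquiv.ofLinear (twoL p q r s) (twoL s (-q) (-r) p) ?_ ?_ <;>
  · apply LinearMap.ext; intro v
    funext i
    simp only [LinearMap.comp_apply, LinearMap.id_apply]
    by_cases h0 : i = 0
    · simp only [h0, twoL_apply, if_pos rfl, if_neg h10, if_neg h01, if_true, eq_self_iff_true]
      linear_combination v 0 * hdet
    · by_cases h1 : i = 1
      · simp only [h0, h1, twoL_apply, if_pos rfl, if_neg h10, if_neg h01, if_true, eq_self_iff_true]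
        linear_combination v 1 * hdet
      · simp [twoL_apply, h0, h1]

lemma twoE_apply {N : ℕ} (p q r s : R) (hdet : p * s - q * r = 1) (v : Fin (N + 2) → R)
    (i : Fin (N + 2)) :
    twoE p q r s hdet v i =
      if i = 0 then p * v 0 + q * v 1 else if i = 1 then r * v 0 + s * v 1 else v i := rfl

end Gadgets2

section SR1
variable {R : Type*} [CommRing R]

lemma span_pair_top {a c u v : R} (h : a * u + c * v = 1) :
    Ideal.span {a} ⊔ Ideal.span {c} = ⊤ := by
  rw [Ideal.eq_top_iff_one]
  refine Submodule.mem_sup.2 ⟨a * u, ?_, c * v, ?_, h⟩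
  · exact Ideal.mem_span_singleton.2 ⟨u, rfl⟩
  · exact Ideal.mem_span_singleton.2 ⟨v, rfl⟩

/-- Stable range 1 for unimodular rows: shorten a row to a unit. -/
lemma sr1_row {S : Type*} [CommRing S] (h : HasStableRange1 S) {k : ℕ}
    (b x : Fin (k + 1) → S) (hx : ∑ i, b i * x i = 1) :
    ∃ t : Fin k → S, IsUnit (b 0 + ∑ i : Fin k, b i.succ * t i) := by
  set c := ∑ i : Fin k, b i.succ * x i.succ with hc
  have h1 : b 0 * x 0 + c * 1 = 1 := by
    rw [mul_one, hc, ← hx, Fin.sum_univ_succ]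
  obtain ⟨y, hy⟩ := h (b 0) c (span_pair_top h1)
  refine ⟨fun i => x i.succ * y, ?_⟩
  have : ∑ i : Fin k, b i.succ * (x i.succ * y) = c * y := by
    rw [hc, Finset.sum_mul]
    exact Finset.sum_congr rfl fun i _ => by ring
  rwa [this]

end SR1

section Complete
variable {R : Type*} [CommRing R]

lemma complete_row (h : LocallyStable R) :
    ∀ (n : ℕ) (a x : Fin (n + 1) → R), (∑ i, a i * x i = 1) →
      ∃ g : (Fin (n + 1) → R) ≃ₗ[R] (Fin (n + 1) → R), g a = Pi.single 0 1 := by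
  intro n
  induction n with
  | zero =>
    intro a x hx
    rw [Fin.sum_univ_one] at hx
    have hx' : x 0 * a 0 = 1 := by rw [mul_comm]; exact hx
    refine ⟨LinearEquiv.ofLinear (x 0 • LinearMap.id) (a 0 • LinearMap.id) ?_ ?_, ?_⟩
    · apply LinearMap.ext; intro v
      simp only [LinearMap.comp_apply, LinearMap.smul_apply, LinearMap.id_apply,
        LinearMap.id_coe, id_eq, smul_smul, hx', one_smul]
    · apply LinearMap.ext; intro v
      simp only [LinearMap.comp_apply, LinearMap.smul_apply, LinearMap.id_apply,
        LinearMap.id_coe, id_eq, smul_smul, hx, one_smul]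
    · show x 0 • a = Pi.single 0 1
      funext i
      have hi : i = 0 := Fin.fin_one_eq_zero i
      subst hi
      simp [hx']
  | succ k _ =>
    intro a x hx
    have h10 : (1 : Fin (k + 2)) ≠ 0 := by simp [Fin.ext_iff]
    set c : R := ∑ i : Fin (k + 1), a i.succ * x i.succ with hcdef
    have hc : a 0 * x 0 + c * 1 = 1 := by
      rw [mul_one, hcdef, ← hx]
      exact (Fin.sum_univ_succ (fun i => a i * x i)).symm
    obtain ⟨y, hS⟩ := h (a 0) c (span_pair_top hc)
    set d : R := a 0 + c * y with hd
    set I : Ideal R := Ideal.span {d} with hI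
    -- the row (a 1, ..., a (k+1)) is unimodular mod d
    have hunim : ∑ i : Fin (k + 1),
        (Ideal.Quotient.mk I (a i.succ)) * (Ideal.Quotient.mk I (x i.succ * (1 - y * x 0))) = 1 := by
      have e1 : ∑ i : Fin (k + 1),
          (Ideal.Quotient.mk I (a i.succ)) * (Ideal.Quotient.mk I (x i.succ * (1 - y * x 0)))
          = Ideal.Quotient.mk I (c * (1 - y * x 0)) := by
        rw [hcdef, Finset.sum_mul, map_sum]
        exact Finset.sum_congr rfl fun i _ => by rw [← map_mul]; ring_nf
      rw [e1, ← map_one (Ideal.Quotient.mk I), Ideal.Quotient.mk_eq_mk_iff_sub_mem, hI]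
      exact Ideal.mem_span_singleton.2 ⟨-(x 0), by rw [hd]; linear_combination hc⟩
    obtain ⟨tS, htS⟩ := sr1_row hS (fun i : Fin (k+1) => Ideal.Quotient.mk I (a i.succ))
      (fun i => Ideal.Quotient.mk I (x i.succ * (1 - y * x 0))) hunim
    choose t ht using fun i => Ideal.Quotient.mk_surjective (tS i)
    set b : R := a 1 + ∑ i : Fin k, a i.succ.succ * t i with hb
    have hub : IsUnit (Ideal.Quotient.mk I b) := by
      convert htS using 2
      rw [hb, map_add, map_sum, Fin.succ_zero_eq_one]
      congr 1
      exact Finset.sum_congr rfl fun i _ => by rw [map_mul, ht]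
    obtain ⟨u', hu'⟩ := isUnit_iff_exists_inv.1 hub
    obtain ⟨u, rfl⟩ := Ideal.Quotient.mk_surjective u'
    have hmem : b * u - 1 ∈ I := by
      refine (Ideal.Quotient.mk_eq_mk_iff_sub_mem _ _).1 ?_
      rw [map_mul, map_one]
      exact hu'
    rw [hI] at hmem
    obtain ⟨s, hs⟩ := (Ideal.mem_span_singleton.1 hmem)
    have key : b * u - d * s = 1 := by linear_combination hs
    -- the four elementary transformations
    set a1v : Fin (k + 2) → R := fun i => if i = 0 then d else a i with ha1v
    set a2v : Fin (k + 2) → R := fun i => if i = 0 then d else if i = 1 then b else a i with ha2v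
    set a3v : Fin (k + 2) → R := fun i => if i = 0 then 1 else if i = 1 then 0 else a i with ha3v
    have a1v0 : a1v 0 = d := by simp [ha1v]
    have a1vne : ∀ i : Fin (k + 2), i ≠ 0 → a1v i = a i := fun i hi => by simp [ha1v, hi]
    have a2v0 : a2v 0 = d := by simp [ha2v]
    have a2v1 : a2v 1 = b := by simp [ha2v, h10]
    have a2vne : ∀ i : Fin (k + 2), i ≠ 0 → i ≠ 1 → a2v i = a i :=
      fun i hi hi' => by simp [ha2v, hi, hi']
    have a3v0 : a3v 0 = 1 := by simp [ha3v]
    have a3v1 : a3v 1 = 0 := by simp [ha3v, h10]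
    have a3vne : ∀ i : Fin (k + 2), i ≠ 0 → i ≠ 1 → a3v i = a i :=
      fun i hi hi' => by simp [ha3v, hi, hi']
    set c1 : Fin (k + 2) → R := Fin.cons 0 (fun i : Fin (k + 1) => y * x i.succ) with hc1
    set c2 : Fin (k + 2) → R := Fin.cons 0 (Fin.cons 0 t) with hc2
    have hc10 : c1 0 = 0 := by rw [hc1, Fin.cons_zero]
    have hc21 : c2 1 = 0 := by rw [hc2, ← Fin.succ_zero_eq_one, Fin.cons_succ, Fin.cons_zero]
    have hdet : (-s) * d - u * (-b) = 1 := by linear_combination key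
    have hw0 : ((Pi.single 0 1 : Fin (k + 2) → R) - a3v) 0 = 0 := by
      simp [a3v0]
    have hg1 : addRow (0 : Fin (k + 2)) c1 hc10 a = a1v := by
      funext i
      rw [addRow_apply]
      by_cases hi : i = 0
      · subst hi
        rw [if_pos rfl, a1v0, hd, hcdef]
        congr 1
        rw [Fin.sum_univ_succ, hc1, Fin.cons_zero, zero_mul, zero_add, Finset.sum_mul]
        exact Finset.sum_congr rfl fun i _ => by rw [Fin.cons_succ]; ring
      · rw [if_neg hi, a1vne i hi]
    have hg2 : addRow (1 : Fin (k + 2)) c2 hc21 a1v = a2v := by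
      funext i
      rw [addRow_apply]
      by_cases hi : i = 1
      · subst hi
        rw [if_pos rfl, a2v1, hb, a1vne 1 h10]
        congr 1
        rw [Fin.sum_univ_succ, hc2, Fin.cons_zero, zero_mul, zero_add,
          Fin.sum_univ_succ, Fin.cons_succ, Fin.cons_zero, zero_mul, zero_add]
        refine Finset.sum_congr rfl fun i _ => ?_
        rw [Fin.cons_succ, Fin.cons_succ, a1vne _ (Fin.succ_ne_zero _)]
        ring
      · rw [if_neg hi]
        by_cases hi0 : i = 0
        · subst hi0; rw [a1v0, a2v0]
        · rw [a1vne i hi0, a2vne i hi0 hi]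
    have hg3 : twoE (-s) u (-b) d hdet a2v = a3v := by
      funext i
      rw [twoE_apply]
      by_cases hi : i = 0
      · subst hi
        rw [if_pos rfl, a3v0, a2v0, a2v1]
        linear_combination key
      · rw [if_neg hi]
        by_cases hi1 : i = 1
        · subst hi1
          rw [if_pos rfl, a3v1, a2v0, a2v1]
          ring
        · rw [if_neg hi1, a2vne i hi hi1, a3vne i hi hi1]
    have hg4 : shear (0 : Fin (k + 2)) ((Pi.single 0 1 : Fin (k + 2) → R) - a3v) hw0 a3v
        = Pi.single 0 1 := by
      rw [shear_apply, a3v0, one_smul, add_sub_cancel]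
    refine ⟨((addRow (0 : Fin (k + 2)) c1 hc10 ≪≫ₗ addRow (1 : Fin (k + 2)) c2 hc21) ≪≫ₗ
      twoE (-s) u (-b) d hdet) ≪≫ₗ
      shear (0 : Fin (k + 2)) ((Pi.single 0 1 : Fin (k + 2) → R) - a3v) hw0, ?_⟩
    simp only [LinearEquiv.trans_apply, hg1, hg2, hg3, hg4]

end Complete

section ModulePart
variable {R : Type*} [CommRing R]

/-- Splitting off the 0-th coordinate. -/
def consSplit (N : ℕ) : (Fin (N + 1) → R) ≃ₗ[R] ((Fin N → R) × R) where
  toFun v := (Fin.tail v, v 0)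
  invFun p := Fin.cons p.2 p.1
  map_add' v w := by
    ext i <;> simp [Fin.tail]
  map_smul' r v := by
    ext i <;> simp [Fin.tail]
  left_inv v := Fin.cons_self_tail v
  right_inv p := by
    ext i <;> simp [Fin.tail]

/-- If an equivalence of `Q × R` with `Q' × R` fixes `(0, 1)`, then `Q ≃ Q'`. -/
noncomputable def quotPair {Q Q' : Type*} [AddCommGroup Q] [Module R Q]
    [AddCommGroup Q'] [Module R Q'] (T : (Q × R) ≃ₗ[R] (Q' × R))
    (hT : T (0, 1) = (0, 1)) : Q ≃ₗ[R] Q' := by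
  have hT' : T.symm (0, 1) = (0, 1) := by
    rw [← hT, LinearEquiv.symm_apply_apply]
  refine LinearEquiv.ofLinear
    ((LinearMap.fst R Q' R) ∘ₗ T.toLinearMap ∘ₗ (LinearMap.inl R Q R))
    ((LinearMap.fst R Q R) ∘ₗ T.symm.toLinearMap ∘ₗ (LinearMap.inl R Q' R)) ?_ ?_
  · apply LinearMap.ext; intro q'
    simp only [LinearMap.comp_apply, LinearMap.inl_apply, LinearMap.fst_apply,
      LinearEquiv.coe_coe, LinearMap.id_apply]
    have e1 : ((T.symm (q', 0)).1, (0 : R)) = T.symm (q', 0) - (T.symm (q', 0)).2 • (0, 1) := by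
      ext <;> simp
    rw [e1, map_sub, map_smul, LinearEquiv.apply_symm_apply, hT]
    simp
  · apply LinearMap.ext; intro q
    simp only [LinearMap.comp_apply, LinearMap.inl_apply, LinearMap.fst_apply,
      LinearEquiv.coe_coe, LinearMap.id_apply]
    have e1 : ((T (q, 0)).1, (0 : R)) = T (q, 0) - (T (q, 0)).2 • (0, 1) := by
      ext <;> simp
    rw [e1, map_sub, map_smul, LinearEquiv.symm_apply_apply, hT']
    simp

lemma step_lemma (h : LocallyStable R) [Nontrivial R]
    {P : Type*} [AddCommGroup P] [Module R P] {m n : ℕ}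
    (e : (P × (Fin (m + 1) → R)) ≃ₗ[R] (Fin n → R)) :
    ∃ n' : ℕ, Nonempty ((P × (Fin m → R)) ≃ₗ[R] (Fin n' → R)) := by
  cases n with
  | zero =>
    exfalso
    have hsub : Subsingleton (P × (Fin (m + 1) → R)) := by
      have : Subsingleton (Fin 0 → R) := inferInstance
      exact e.toEquiv.subsingleton
    have h1 : ((0, fun _ => (1 : R)) : P × (Fin (m + 1) → R)) = (0, fun _ => 0) :=
      Subsingleton.elim _ _
    exact one_ne_zero (congrFun (congrArg Prod.snd h1) 0)
  | succ n' =>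
    -- the unimodular vector
    set a : Fin (n' + 1) → R := e (0, Fin.cons 1 0) with ha
    set φ : (Fin (n' + 1) → R) →ₗ[R] R :=
      (LinearMap.proj 0) ∘ₗ (LinearMap.snd R P (Fin (m + 1) → R)) ∘ₗ e.symm.toLinearMap with hφ
    have hφa : φ a = 1 := by
      rw [hφ, ha]
      simp only [LinearMap.comp_apply, LinearEquiv.coe_coe, LinearEquiv.symm_apply_apply,
        LinearMap.snd_apply, LinearMap.proj_apply]
      exact Fin.cons_zero _ _
    have hunim : ∑ i, a i * φ (Pi.single i 1 : Fin (n' + 1) → R) = 1 := by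
      have expand : φ a = ∑ i, a i * φ (Pi.single i 1 : Fin (n' + 1) → R) := by
        conv_lhs => rw [← Finset.univ_sum_single a]
        rw [map_sum]
        refine Finset.sum_congr rfl fun i _ => ?_
        have hsing : (Pi.single i (a i) : Fin (n' + 1) → R)
            = a i • (Pi.single i 1 : Fin (n' + 1) → R) := by
          rw [← Pi.single_smul, smul_eq_mul, mul_one]
        rw [hsing, map_smul, smul_eq_mul]
      rw [← expand]
      exact hφa
    obtain ⟨g, hg⟩ := complete_row h n' a (fun i => φ (Pi.single i 1 : Fin (n' + 1) → R)) hunim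
    -- assemble
    refine ⟨n', ⟨quotPair (T := ?_) ?_⟩⟩
    · exact (LinearEquiv.prodAssoc R P (Fin m → R) R) ≪≫ₗ
        (LinearEquiv.refl R P).prodCongr (consSplit m).symm ≪≫ₗ e ≪≫ₗ g ≪≫ₗ consSplit n'
    · show (consSplit n') (g (e ((LinearEquiv.refl R P).prodCongr (consSplit m).symm
        ((LinearEquiv.prodAssoc R P (Fin m → R) R) ((0, 0), 1)))) ) = (0, 1)
      have e0 : (LinearEquiv.prodAssoc R P (Fin m → R) R) (((0 : P), (0 : Fin m → R)), (1 : R))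
          = (0, (0, 1)) := rfl
      have e1 : ((LinearEquiv.refl R P).prodCongr (consSplit m).symm) ((0 : P), ((0 : Fin m → R), (1 : R)))
          = (0, Fin.cons 1 0) := rfl
      rw [e0, e1, ← ha, hg]
      show (Fin.tail (Pi.single 0 1 : Fin (n' + 1) → R), (Pi.single 0 1 : Fin (n' + 1) → R) 0)
        = (0, 1)
      refine Prod.ext ?_ ?_
      · funext i
        show (Pi.single 0 1 : Fin (n' + 1) → R) i.succ = 0
        exact Pi.single_eq_of_ne (Fin.succ_ne_zero i) 1
      · show (Pi.single 0 1 : Fin (n' + 1) → R) 0 = 1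
        exact Pi.single_eq_same 0 1

end ModulePart

lemma free_aux {R : Type*} [CommRing R] (h : LocallyStable R) [Nontrivial R]
    (P : Type*) [AddCommGroup P] [Module R P] :
    ∀ (m n : ℕ), ((P × (Fin m → R)) ≃ₗ[R] (Fin n → R)) → Module.Free R P := by
  intro m
  induction m with
  | zero =>
    intro n e
    have e0 : (P × (Fin 0 → R)) ≃ₗ[R] P :=
      LinearEquiv.ofLinear (LinearMap.fst R P (Fin 0 → R)) (LinearMap.inl R P (Fin 0 → R))
        (LinearMap.ext fun p => rfl)
        (LinearMap.ext fun q => Prod.ext rfl (Subsingleton.elim _ _))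
    exact Module.Free.of_equiv (e0.symm ≪≫ₗ e).symm
  | succ m ih =>
    intro n e
    obtain ⟨n', ⟨e'⟩⟩ := step_lemma h e
    exact ih n' e'

theorem stmt16 (R : Type*) [CommRing R] (h : LocallyStable R)
    (P : Type*) [AddCommGroup P] [Module R P]
    (hsf : ∃ m n : ℕ, Nonempty ((P × (Fin m → R)) ≃ₗ[R] (Fin n → R))) :
    Module.Free R P := by
  obtain ⟨m, n, ⟨e⟩⟩ := hsf
  rcases subsingleton_or_nontrivial R with hR | hR
  · have : Subsingleton P := Module.subsingleton R P
    exact Module.Free.of_subsingleton R P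
  · exact free_aux h P m n e
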